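/- arXiv:1410.2198 — 2 statements merged into one kernel-verified Lean document; each statement's English description precedes it below -/
import Mathlib

section
/- Let D be an (n,α,p)-pseudorandom digraph with p = ω((log n)^8/n), and let X, Y ⊆ V(D) (not necessarily disjoint) with |X| = ⌊(log n)^2/(2p)⌋, |Y| ≥ 6(log n)^{2.1}/(αp), and suppose every x ∈ X satisfies d^+(x,Y), d^−(x,Y) ≥ (1/2 + α/2)p|Y|. Then |N^+(X,Y)| ≥ (1/2 + α/20)|Y| and |N^−(X,Y)| ≥ (1/2 + α/20)|Y|. -/
open Filter

def outDeg {n : ℕ} (D : Fin n → Fin n → Bool) (v : Fin n) (S : Finset (Fin n)) : ℕ :=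
  (S.filter fun w => D v w = true).card

def inDeg {n : ℕ} (D : Fin n → Fin n → Bool) (v : Fin n) (S : Finset (Fin n)) : ℕ :=
  (S.filter fun w => D w v = true).card

def arcsIn {n : ℕ} (D : Fin n → Fin n → Bool) (X : Finset (Fin n)) : ℕ :=
  ((X ×ˢ X).filter fun e => D e.1 e.2 = true).card

def arcsBetween {n : ℕ} (D : Fin n → Fin n → Bool) (X Y : Finset (Fin n)) : ℕ :=
  ((X ×ˢ Y).filter fun e => D e.1 e.2 = true).card

/-- An `(n, α, p)`-pseudorandom digraph, as in Definition 3.1 of the paper. -/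
def IsPseudorandom (n : ℕ) (α p : ℝ) (D : Fin n → Fin n → Bool) : Prop :=
  (∀ v : Fin n, (1/2 + 2*α) * n * p ≤ (outDeg D v Finset.univ : ℝ) ∧
    (1/2 + 2*α) * n * p ≤ (inDeg D v Finset.univ : ℝ)) ∧
  (∀ X : Finset (Fin n), (X.card : ℝ) ≤ (Real.log n)^2 / p →
    (arcsIn D X : ℝ) ≤ (X.card : ℝ) * (Real.log n) ^ (2.1 : ℝ)) ∧
  (∀ X Y : Finset (Fin n), Disjoint X Y →
    (Real.log n) ^ (1.1 : ℝ) / p ≤ (X.card : ℝ) →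
    (Real.log n) ^ (1.1 : ℝ) / p ≤ (Y.card : ℝ) →
    (arcsBetween D X Y : ℝ) ≤ (1 + α/2) * X.card * Y.card * p)

/-- `N^+(X, Y)`: out-neighbours of `X` inside `Y`. -/
def outNbhd {n : ℕ} (D : Fin n → Fin n → Bool) (X Y : Finset (Fin n)) : Finset (Fin n) :=
  Y.filter fun y => ∃ x ∈ X, D x y = true

/-- `N^-(X, Y)`: in-neighbours of `X` inside `Y`. -/
def inNbhd {n : ℕ} (D : Fin n → Fin n → Bool) (X Y : Finset (Fin n)) : Finset (Fin n) :=
  Y.filter fun y => ∃ x ∈ X, D y x = true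

lemma sum_outDeg {n : ℕ} (D : Fin n → Fin n → Bool) (X Y : Finset (Fin n)) :
    arcsBetween D X Y = ∑ x ∈ X, outDeg D x Y := by
  classical
  rw [arcsBetween, Finset.card_filter, Finset.sum_product]
  refine Finset.sum_congr rfl fun x _ => ?_
  rw [outDeg, Finset.card_filter]

lemma arcs_split {n : ℕ} (D : Fin n → Fin n → Bool) (X Y N : Finset (Fin n))
    (h : ∀ x ∈ X, ∀ y ∈ Y, D x y = true → y ∉ X → y ∈ N) :
    arcsBetween D X Y ≤ arcsBetween D X N + arcsIn D X := by
  classical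
  refine le_trans (Finset.card_le_card ?_) (Finset.card_union_le _ _)
  intro e he
  simp only [Finset.mem_filter, Finset.mem_product, Finset.mem_union] at *
  obtain ⟨⟨h1, h2⟩, h3⟩ := he
  by_cases hx : e.2 ∈ X
  · exact Or.inr ⟨⟨h1, hx⟩, h3⟩
  · exact Or.inl ⟨⟨h1, h e.1 h1 e.2 h2 h3 hx⟩, h3⟩

lemma logFacts (L : ℝ) (hL : 2 ≤ L) (h09 : 4 ≤ L ^ (0.9:ℝ)) :
    1 ≤ L ^ (1.1:ℝ) ∧ 4 * L ^ (1.1:ℝ) ≤ L ^ 2 ∧ 2 * L ^ (1.1:ℝ) ≤ L ^ (2.1:ℝ) ∧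
      L ^ (2.1:ℝ) ≤ L ^ 8 := by
  have hL0 : (0:ℝ) < L := by linarith
  have hL1 : (1:ℝ) ≤ L := by linarith
  have h1 : (1:ℝ) ≤ L ^ (1.1:ℝ) := by
    calc (1:ℝ) = L ^ (0:ℝ) := (Real.rpow_zero L).symm
    _ ≤ L ^ (1.1:ℝ) := Real.rpow_le_rpow_of_exponent_le hL1 (by norm_num)
  have h2eq : L ^ 2 = L ^ (1.1:ℝ) * L ^ (0.9:ℝ) := by
    rw [← Real.rpow_add hL0, ← Real.rpow_natCast L 2]
    norm_num
  have h21eq : L ^ (2.1:ℝ) = L ^ (1.1:ℝ) * L := by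
    have h : L ^ (2.1:ℝ) = L ^ (1.1:ℝ) * L ^ (1:ℝ) := by
      rw [← Real.rpow_add hL0]; norm_num
    rwa [Real.rpow_one] at h
  refine ⟨h1, by rw [h2eq]; nlinarith, by rw [h21eq]; nlinarith, ?_⟩
  calc L ^ (2.1:ℝ) ≤ L ^ (8:ℝ) := Real.rpow_le_rpow_of_exponent_le hL1 (by norm_num)
  _ = L ^ (8:ℕ) := by rw [← Real.rpow_natCast L 8]; norm_num

lemma arith_sX (L P sR : ℝ) (hP0 : 0 < P) (hP1 : P < 1)
    (hL1ge1 : 1 ≤ L ^ (1.1:ℝ)) (h4 : 4 * L ^ (1.1:ℝ) ≤ L ^ 2)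
    (hs : L ^ 2 / (2 * P) - 1 < sR) : L ^ (1.1:ℝ) / P ≤ sR := by
  rw [div_le_iff₀ hP0]
  have h1 : (L ^ 2 / (2 * P) - 1) * P ≤ sR * P :=
    mul_le_mul_of_nonneg_right hs.le hP0.le
  have h2 : (L ^ 2 / (2 * P) - 1) * P = L ^ 2 / 2 - P := by field_simp
  nlinarith

lemma arith_spos (L P sR : ℝ) (hP0 : 0 < P) (hP1 : P < 1) (hL : 2 ≤ L)
    (hs : L ^ 2 / (2 * P) - 1 < sR) : 0 < sR := by
  have : (2:ℝ) ≤ L ^ 2 / (2 * P) := by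
    rw [le_div_iff₀ (by positivity)]
    nlinarith
  linarith

lemma arith_room (L P cR sR nn : ℝ) (hP0 : 0 < P) (hP1 : P < 1) (hL : 2 ≤ L)
    (hL1ge1 : 1 ≤ L ^ (1.1:ℝ)) (h4 : 4 * L ^ (1.1:ℝ) ≤ L ^ 2)
    (hPn : 2 * L ^ 8 ≤ P * nn)
    (hc : cR < L ^ (1.1:ℝ) / P + 1) (hs : sR ≤ L ^ 2 / (2 * P)) :
    cR + sR ≤ nn := by
  set L1 := L ^ (1.1:ℝ)
  have h64 : (64:ℝ) ≤ L ^ 6 := by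
    calc (64:ℝ) = 2 ^ 6 := by norm_num
    _ ≤ L ^ 6 := pow_le_pow_left₀ (by norm_num) hL 6
  have hL8 : 64 * L ^ 2 ≤ L ^ 8 := by
    have he : L ^ 8 = L ^ 2 * L ^ 6 := by ring
    nlinarith [sq_nonneg L]
  have h1L2 : (1:ℝ) ≤ L ^ 2 := by nlinarith
  have h5 : L1 + P + L ^ 2 / 2 ≤ nn * P := by nlinarith
  calc cR + sR ≤ (L1 / P + 1) + L ^ 2 / (2 * P) := by linarith
  _ = (L1 + P + L ^ 2 / 2) / P := by field_simp
  _ ≤ (nn * P) / P := div_le_div_of_nonneg_right h5 hP0.le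
  _ = nn := by field_simp

lemma arith_main (α P y s m c nR L1 L21 : ℝ)
    (hα : 0 < α) (hα1 : α ≤ 1) (hP0 : 0 < P) (hP1 : P < 1)
    (hL1ge1 : 1 ≤ L1) (h2L1 : 2 * L1 ≤ L21)
    (hcge : L1 / P ≤ c) (hclt : c < L1 / P + 1)
    (hy : 6 * L21 / (α * P) ≤ y)
    (hs : 0 < s) (hnR : 0 ≤ nR)
    (hm : m = max nR c)
    (hmain : s * ((1/2 + α/2) * P * y) ≤ (1 + α/2) * s * m * P + s * L21) :
    (1/2 + α/20) * y ≤ nR := by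
  have hL21pos : (0:ℝ) < L21 := by linarith
  have hy0 : (0:ℝ) < y := lt_of_lt_of_le (by positivity) hy
  have hc0 : (0:ℝ) ≤ c := le_trans (by positivity) hcge
  have hcancel : (1/2 + α/2) * P * y ≤ (1 + α/2) * m * P + L21 := by
    have h' : s * ((1/2 + α/2) * P * y) ≤ s * ((1 + α/2) * m * P + L21) := by
      nlinarith [hmain]
    exact le_of_mul_le_mul_left h' hs
  have hL21y : L21 ≤ α * P * y / 6 := by
    rw [div_le_iff₀ (by positivity)] at hy
    nlinarith
  have hstep : (1/2 + α/3) * y ≤ (1 + α/2) * m := by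
    have h1 : ((1/2 + α/3) * y) * P ≤ ((1 + α/2) * m) * P := by nlinarith
    exact le_of_mul_le_mul_right h1 hP0
  have hcbound : (1 + α/2) * c < (1/2 + α/3) * y := by
    have hL1P : (1:ℝ) ≤ L1 / P := by
      rw [le_div_iff₀ hP0]; nlinarith
    have hc2 : c < L21 / P := by
      have hd : 2 * L1 / P ≤ L21 / P := div_le_div_of_nonneg_right h2L1 hP0.le
      have h2 : L1 / P + 1 ≤ 2 * L1 / P := by
        have he : 2 * L1 / P = L1 / P + L1 / P := by ring
        linarith
      linarith
    have h6 : 3 * (L21 / P) ≤ (1/2) * y := by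
      have hd : 6 * L21 / P ≤ 6 * L21 / (α * P) := by
        apply div_le_div_of_nonneg_left (by positivity) (by positivity)
        nlinarith
      have he : 6 * L21 / P = 6 * (L21 / P) := by ring
      linarith
    have hL21P : (0:ℝ) < L21 / P := by positivity
    nlinarith [mul_nonneg hα.le hy0.le, mul_le_mul_of_nonneg_right hα1 hc0]
  have hfinal : (1/2 + α/3) * y ≤ (1 + α/2) * nR := by
    rcases le_total c nR with h | h
    · rwa [hm, max_eq_left h] at hstep
    · exfalso
      rw [hm, max_eq_right h] at hstep
      linarith
  nlinarith [mul_nonneg (mul_nonneg hα.le hy0.le) (sub_nonneg.mpr hα1)]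

lemma arith_big (α P nn L21 : ℝ) (hα1 : 1 ≤ α) (hP0 : 0 < P)
    (hL21le : L21 ≤ (L8 : ℝ)) (hL8pos : 0 < L8) (hPn : 2 * L8 ≤ P * nn)
    (a : ℝ) (ha : 0 < a)
    (hmain : a * ((1/2 + 2*α) * nn * P) ≤ (1 + α/2) * a * nn * P + a * L21) :
    False := by
  have hnnP : (0:ℝ) ≤ nn * P := by nlinarith
  have h1 : (1/2 + 2*α) * nn * P ≤ (1 + α/2) * nn * P + L21 := by
    have h' : a * ((1/2 + 2*α) * nn * P) ≤ a * ((1 + α/2) * nn * P + L21) := by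
      nlinarith [hmain]
    exact le_of_mul_le_mul_left h' ha
  have h2 : (3*α/2 - 1/2) * (nn * P) ≤ L21 := by nlinarith
  have h3 : nn * P ≤ L21 := by nlinarith
  linarith

lemma key {n : ℕ} {α P : ℝ} (hα : 0 < α) (hα1 : α ≤ 1) (hP0 : 0 < P) (hP1 : P < 1)
    {D : Fin n → Fin n → Bool} (hD : IsPseudorandom n α P D)
    (hL : 2 ≤ Real.log n) (hL09 : 4 ≤ (Real.log n) ^ (0.9 : ℝ))
    (hPn : 2 * (Real.log n)^8 ≤ P * n)
    (X Y : Finset (Fin n))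
    (hX : X.card = ⌊(Real.log n)^2 / (2*P)⌋₊)
    (hY : 6 * (Real.log n)^(2.1 : ℝ) / (α * P) ≤ (Y.card : ℝ))
    (hdeg : ∀ x ∈ X, (1/2 + α/2) * P * Y.card ≤ (outDeg D x Y : ℝ)) :
    (1/2 + α/20) * Y.card ≤ ((outNbhd D X Y).card : ℝ) := by
  classical
  set L := Real.log n with hLdef
  obtain ⟨hL1ge1, hL4, h2L1, hL21le8⟩ := logFacts L hL hL09
  -- basic facts about |X|
  have hsR_le : (X.card : ℝ) ≤ L ^ 2 / (2 * P) := by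
    rw [hX]; exact Nat.floor_le (by positivity)
  have hsR_gt : L ^ 2 / (2 * P) - 1 < (X.card : ℝ) := by
    rw [hX]; exact Nat.sub_one_lt_floor _
  have hs_pos : (0:ℝ) < (X.card : ℝ) := arith_spos L P _ hP0 hP1 hL hsR_gt
  have hsX : L ^ (1.1:ℝ) / P ≤ (X.card : ℝ) := arith_sX L P _ hP0 hP1 hL1ge1 hL4 hsR_gt
  -- the padded neighbourhood
  set N' : Finset (Fin n) := (outNbhd D X Y) \ X with hN'def
  set c : ℕ := ⌈L ^ (1.1:ℝ) / P⌉₊ with hcdef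
  have hc_ge : L ^ (1.1:ℝ) / P ≤ (c : ℝ) := Nat.le_ceil _
  have hc_lt : (c : ℝ) < L ^ (1.1:ℝ) / P + 1 := Nat.ceil_lt_add_one (by positivity)
  have hroom : (c : ℝ) + (X.card : ℝ) ≤ (n : ℝ) :=
    arith_room L P _ _ _ hP0 hP1 hL hL1ge1 hL4 hPn hc_lt hsR_le
  have hNsub : N' ⊆ Finset.univ \ X := by
    intro y hy
    rw [Finset.mem_sdiff] at hy ⊢
    exact ⟨Finset.mem_univ _, hy.2⟩
  have hcard_compl : ((Finset.univ \ X).card : ℝ) = (n : ℝ) - (X.card : ℝ) := by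
    rw [Finset.card_sdiff_of_subset (Finset.subset_univ X)]
    rw [Nat.cast_sub (by simpa using Finset.card_le_univ X)]
    simp
  obtain ⟨N'', hN'N'', hN''sub, hN''card⟩ :=
    Finset.exists_subsuperset_card_eq hNsub (le_max_left N'.card c)
      (by
        rw [max_le_iff]
        refine ⟨Finset.card_le_card hNsub, ?_⟩
        have hcc : (c:ℝ) ≤ ((Finset.univ \ X).card : ℝ) := by
          rw [hcard_compl]; linarith
        exact_mod_cast hcc)
  have hdisj : Disjoint X N'' := by
    rw [Finset.disjoint_right]
    intro y hy hyX
    have hmem := hN''sub hy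
    rw [Finset.mem_sdiff] at hmem
    exact hmem.2 hyX
  have hN''ge : L ^ (1.1:ℝ) / P ≤ (N''.card : ℝ) := by
    rw [hN''card]
    calc L ^ (1.1:ℝ) / P ≤ (c:ℝ) := hc_ge
    _ ≤ ((max N'.card c : ℕ) : ℝ) := by exact_mod_cast le_max_right _ _
  -- lower bound on arcs
  have hlow : (X.card : ℝ) * ((1/2 + α/2) * P * Y.card) ≤ (arcsBetween D X Y : ℝ) := by
    rw [sum_outDeg]
    push_cast
    calc (X.card : ℝ) * ((1/2 + α/2) * P * Y.card)
        = ∑ _x ∈ X, (1/2 + α/2) * P * (Y.card:ℝ) := by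
          rw [Finset.sum_const, nsmul_eq_mul]
    _ ≤ ∑ x ∈ X, (outDeg D x Y : ℝ) := Finset.sum_le_sum hdeg
  -- upper bound on arcs
  have hsplit := arcs_split D X Y N'' (by
    intro x hx y hy hxy hyX
    apply hN'N''
    rw [hN'def, Finset.mem_sdiff]
    refine ⟨?_, hyX⟩
    rw [outNbhd, Finset.mem_filter]
    exact ⟨hy, x, hx, hxy⟩)
  have hP2 : (arcsIn D X : ℝ) ≤ (X.card : ℝ) * L ^ (2.1:ℝ) := by
    apply hD.2.1
    calc (X.card : ℝ) ≤ L ^ 2 / (2 * P) := hsR_le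
    _ ≤ L ^ 2 / P := by
      apply div_le_div_of_nonneg_left (by positivity) hP0
      linarith
  have hP3 : (arcsBetween D X N'' : ℝ) ≤ (1 + α/2) * X.card * N''.card * P :=
    hD.2.2 X N'' hdisj hsX hN''ge
  have hup : (X.card : ℝ) * ((1/2 + α/2) * P * Y.card) ≤
      (1 + α/2) * X.card * N''.card * P + X.card * L ^ (2.1:ℝ) := by
    have hc1 : (arcsBetween D X Y : ℝ) ≤
        (arcsBetween D X N'' : ℝ) + (arcsIn D X : ℝ) := by
      exact_mod_cast hsplit
    linarith
  have hmR : ((N''.card : ℕ) : ℝ) = max ((N'.card : ℕ) : ℝ) ((c : ℕ) : ℝ) := by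
    rw [hN''card]; push_cast; rfl
  have hkey : (1/2 + α/20) * (Y.card : ℝ) ≤ (N'.card : ℝ) := by
    refine arith_main α P (Y.card : ℝ) (X.card : ℝ) (N''.card : ℝ) (c:ℝ) (N'.card : ℝ)
      (L ^ (1.1:ℝ)) (L ^ (2.1:ℝ)) hα hα1 hP0 hP1 hL1ge1 h2L1 hc_ge hc_lt hY hs_pos
      (Nat.cast_nonneg _) hmR ?_
    calc (X.card : ℝ) * ((1/2 + α/2) * P * Y.card)
        ≤ (1 + α/2) * X.card * N''.card * P + X.card * L ^ (2.1:ℝ) := hup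
    _ = (1 + α/2) * (X.card : ℝ) * N''.card * P + (X.card : ℝ) * L ^ (2.1:ℝ) := by ring
  have hNle : (N'.card : ℝ) ≤ ((outNbhd D X Y).card : ℝ) := by
    exact_mod_cast Finset.card_le_card Finset.sdiff_subset
  linarith

lemma bigAlpha {n : ℕ} {α P : ℝ} (hα1 : 1 ≤ α) (hP0 : 0 < P) (hP1 : P < 1)
    {D : Fin n → Fin n → Bool} (hD : IsPseudorandom n α P D)
    (hL : 2 ≤ Real.log n) (hL09 : 4 ≤ (Real.log n) ^ (0.9 : ℝ))
    (hPn : 2 * (Real.log n)^8 ≤ P * n) : False := by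
  classical
  set L := Real.log n with hLdef
  obtain ⟨hL1ge1, hL4, h2L1, hL21le8⟩ := logFacts L hL hL09
  set a : ℕ := ⌊L ^ 2 / (2 * P)⌋₊ with hadef
  have haR_le : (a : ℝ) ≤ L ^ 2 / (2 * P) := Nat.floor_le (by positivity)
  have haR_gt : L ^ 2 / (2 * P) - 1 < (a : ℝ) := Nat.sub_one_lt_floor _
  have ha_pos : (0:ℝ) < (a : ℝ) := arith_spos L P _ hP0 hP1 hL haR_gt
  have haX : L ^ (1.1:ℝ) / P ≤ (a : ℝ) := arith_sX L P _ hP0 hP1 hL1ge1 hL4 haR_gt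
  have hroom : (0:ℝ) + (a : ℝ) ≤ (n : ℝ) := by
    have := arith_room L P 0 (a:ℝ) (n:ℝ) hP0 hP1 hL hL1ge1 hL4 hPn (by positivity) haR_le
    linarith
  have han : a ≤ n := by exact_mod_cast (by linarith : (a:ℝ) ≤ (n:ℝ))
  obtain ⟨A, _, hAcard⟩ := Finset.exists_subset_card_eq
    (show a ≤ (Finset.univ : Finset (Fin n)).card by simpa using han)
  set B : Finset (Fin n) := Finset.univ \ A with hBdef
  have hdisj : Disjoint A B := Finset.disjoint_sdiff
  have hBcard : ((B.card : ℕ) : ℝ) = (n : ℝ) - (a : ℝ) := by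
    rw [hBdef, Finset.card_sdiff_of_subset (Finset.subset_univ A), hAcard]
    rw [Nat.cast_sub (by simpa using han)]
    simp
  have hBge : L ^ (1.1:ℝ) / P ≤ (B.card : ℝ) := by
    have hbig := arith_room L P ((L ^ (1.1:ℝ))/P) (a:ℝ) (n:ℝ) hP0 hP1 hL hL1ge1 hL4 hPn
      (by linarith) haR_le
    rw [hBcard]
    linarith
  have hlow : (a:ℝ) * ((1/2 + 2*α) * n * P) ≤ (arcsBetween D A Finset.univ : ℝ) := by
    rw [sum_outDeg]
    push_cast
    calc (a : ℝ) * ((1/2 + 2*α) * n * P)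
        = ∑ _x ∈ A, (1/2 + 2*α) * (n:ℝ) * P := by
          rw [Finset.sum_const, nsmul_eq_mul, hAcard]
    _ ≤ ∑ x ∈ A, (outDeg D x Finset.univ : ℝ) :=
          Finset.sum_le_sum fun x _ => (hD.1 x).1
  have hsplit := arcs_split D A Finset.univ B (by
    intro x hx y hy hxy hyX
    rw [hBdef, Finset.mem_sdiff]
    exact ⟨Finset.mem_univ _, hyX⟩)
  have hP2 : (arcsIn D A : ℝ) ≤ (a : ℝ) * L ^ (2.1:ℝ) := by
    rw [← hAcard]
    apply hD.2.1
    rw [hAcard]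
    calc (a : ℝ) ≤ L ^ 2 / (2 * P) := haR_le
    _ ≤ L ^ 2 / P := by
      apply div_le_div_of_nonneg_left (by positivity) hP0
      linarith
  have hP3 : (arcsBetween D A B : ℝ) ≤ (1 + α/2) * a * n * P := by
    calc (arcsBetween D A B : ℝ) ≤ (1 + α/2) * A.card * B.card * P :=
          hD.2.2 A B hdisj (by rw [hAcard]; exact haX) hBge
    _ ≤ (1 + α/2) * a * n * P := by
          rw [hAcard]
          have hBn : (B.card : ℝ) ≤ (n : ℝ) := by
            have hb2 : B.card ≤ Finset.univ.card := Finset.card_le_card (Finset.subset_univ B)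
            rw [Finset.card_univ, Fintype.card_fin] at hb2
            exact_mod_cast hb2
          have h0 : (0:ℝ) ≤ (1 + α/2) * a := by positivity
          nlinarith [mul_le_mul_of_nonneg_left hBn h0, hP0.le,
            mul_le_mul_of_nonneg_right (mul_le_mul_of_nonneg_left hBn h0) hP0.le]
  refine arith_big α P (n:ℝ) (L ^ (2.1:ℝ)) hα1 hP0 hL21le8 (by positivity : (0:ℝ) < L^8)
    hPn (a:ℝ) ha_pos ?_
  have hc1 : (arcsBetween D A Finset.univ : ℝ) ≤
      (arcsBetween D A B : ℝ) + (arcsIn D A : ℝ) := by exact_mod_cast hsplit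
  calc (a:ℝ) * ((1/2 + 2*α) * (n:ℝ) * P) ≤ (1 + α/2) * a * n * P + a * L ^ (2.1:ℝ) := by
        linarith
  _ = (1 + α/2) * (a:ℝ) * (n:ℝ) * P + (a:ℝ) * L ^ (2.1:ℝ) := by ring

lemma arcsBetween_swap {n : ℕ} (D : Fin n → Fin n → Bool) (X Y : Finset (Fin n)) :
    arcsBetween (fun v w => D w v) X Y = arcsBetween D Y X := by
  classical
  unfold arcsBetween
  rw [← Finset.card_map ⟨Prod.swap, Prod.swap_injective⟩]
  congr 1
  ext e
  simp only [Finset.mem_map, Finset.mem_filter, Finset.mem_product, Function.Embedding.coeFn_mk]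
  constructor
  · rintro ⟨a, ⟨⟨ha1, ha2⟩, ha3⟩, rfl⟩
    exact ⟨⟨ha2, ha1⟩, ha3⟩
  · rintro ⟨⟨h1, h2⟩, h3⟩
    exact ⟨e.swap, ⟨⟨h2, h1⟩, h3⟩, by simp⟩

lemma transpose_pseudo {n : ℕ} {α P : ℝ} {D : Fin n → Fin n → Bool}
    (hD : IsPseudorandom n α P D) : IsPseudorandom n α P (fun v w => D w v) := by
  obtain ⟨h1, h2, h3⟩ := hD
  refine ⟨fun v => ⟨(h1 v).2, (h1 v).1⟩, fun X hX => ?_, fun X Y hXY hX hY => ?_⟩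
  · have e : arcsIn (fun v w => D w v) X = arcsIn D X := arcsBetween_swap D X X
    rw [e]; exact h2 X hX
  · have e : arcsBetween (fun v w => D w v) X Y = arcsBetween D Y X := arcsBetween_swap D X Y
    rw [e]
    calc (arcsBetween D Y X : ℝ) ≤ (1 + α/2) * Y.card * X.card * P := h3 Y X hXY.symm hY hX
    _ = (1 + α/2) * X.card * Y.card * P := by ring

/-- Lemma 4.1: in a pseudorandom digraph, a set `X` of size `⌊log² n/(2p)⌋`
whose vertices have large in/out-degree into `Y` expands to more than half
of `Y` in both directions. -/
theorem stmt_8 (α : ℝ) (hα : 0 < α) (p : ℕ → ℝ) (hp : ∀ n, 0 < p n ∧ p n < 1)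
    (hω : Tendsto (fun n : ℕ => p n * n / (Real.log n) ^ 8) atTop atTop)
    (D : (n : ℕ) → Fin n → Fin n → Bool)
    (hD : ∀ n, IsPseudorandom n α (p n) (D n)) :
    ∀ᶠ n in atTop, ∀ X Y : Finset (Fin n),
      X.card = ⌊(Real.log n) ^ 2 / (2 * p n)⌋₊ →
      6 * (Real.log n) ^ (2.1 : ℝ) / (α * p n) ≤ (Y.card : ℝ) →
      (∀ x ∈ X, (1/2 + α/2) * p n * Y.card ≤ (outDeg (D n) x Y : ℝ) ∧
        (1/2 + α/2) * p n * Y.card ≤ (inDeg (D n) x Y : ℝ)) →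
      (1/2 + α/20) * Y.card ≤ ((outNbhd (D n) X Y).card : ℝ) ∧
      (1/2 + α/20) * Y.card ≤ ((inNbhd (D n) X Y).card : ℝ) := by
  have hlog : Tendsto (fun n : ℕ => Real.log n) atTop atTop :=
    Real.tendsto_log_atTop.comp tendsto_natCast_atTop_atTop
  have h09 : Tendsto (fun n : ℕ => (Real.log n) ^ (0.9:ℝ)) atTop atTop :=
    (tendsto_rpow_atTop (by norm_num : (0:ℝ) < 0.9)).comp hlog
  filter_upwards [hlog.eventually_ge_atTop 2, h09.eventually_ge_atTop 4,
    hω.eventually_ge_atTop 2] with n hL hL09 hω2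
  intro X Y hX hY hdeg
  have hP0 := (hp n).1
  have hP1 := (hp n).2
  have hPn : 2 * (Real.log n)^8 ≤ p n * n := by
    have hL8 : (0:ℝ) < (Real.log n)^8 := by positivity
    rw [le_div_iff₀ hL8] at hω2
    linarith
  rcases le_or_gt α 1 with hle | hgt
  · constructor
    · exact key hα hle hP0 hP1 (hD n) hL hL09 hPn X Y hX hY (fun x hx => (hdeg x hx).1)
    · exact key hα hle hP0 hP1 (transpose_pseudo (hD n)) hL hL09 hPn X Y hX hY
        (fun x hx => (hdeg x hx).2)
  · exact (bigAlpha hgt.le hP0 hP1 (hD n) hL hL09 hPn).elim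
end

section
/- Let D be an (n,α,p)-pseudorandom digraph with p = ω((log n)^8/n), and let S, T be disjoint vertex sets with |S| ≤ |T|/8, |T| ≥ 6(log n)^{2.2}/p, and d^+(s,T) ≥ (1/2 + α/2)p|T| for every s ∈ S. Then there exists a (2,+)-matching from S to T saturating S, i.e., an assignment to each s ∈ S of two distinct out-neighbors in T such that all assigned vertices are distinct across different elements of S. -/
open Filter

lemma arcsBetween_eq_sum {n : ℕ} (D : Fin n → Fin n → Bool) (X Y : Finset (Fin n)) :
    arcsBetween D X Y = ∑ s ∈ X, outDeg D s Y := by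
  classical
  unfold arcsBetween outDeg
  rw [Finset.card_eq_sum_card_fiberwise (f := Prod.fst) (t := X)
    (fun e he => by simp [Finset.mem_filter, Finset.mem_product] at he; exact he.1.1)]
  refine Finset.sum_congr rfl fun s hs => ?_
  have h : (((X ×ˢ Y).filter fun e => D e.1 e.2 = true).filter fun e => e.1 = s)
      = {s} ×ˢ (Y.filter fun w => D s w = true) := by
    ext e
    simp only [Finset.mem_filter, Finset.mem_product, Finset.mem_singleton]
    constructor
    · rintro ⟨⟨⟨hx, hy⟩, hd⟩, rfl⟩; exact ⟨rfl, hy, hd⟩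
    · rintro ⟨he1, hy, hd⟩
      refine ⟨⟨⟨?_, hy⟩, ?_⟩, he1⟩ <;> rw [he1] <;> assumption
  rw [h, Finset.card_product, Finset.card_singleton, one_mul]

lemma arcsBetween_le_arcsIn {n : ℕ} (D : Fin n → Fin n → Bool) (X Y : Finset (Fin n)) :
    arcsBetween D X Y ≤ arcsIn D (X ∪ Y) := by
  apply Finset.card_le_card
  exact Finset.filter_subset_filter _
    (Finset.product_subset_product Finset.subset_union_left Finset.subset_union_right)

set_option maxHeartbeats 1000000 in
lemma hall_key {n : ℕ} {α P : ℝ} (hα : 0 < α) (hP0 : 0 < P) (hP1 : P < 1)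
    (D : Fin n → Fin n → Bool)
    (P2 : ∀ X : Finset (Fin n), (X.card : ℝ) ≤ (Real.log n)^2 / P →
      (arcsIn D X : ℝ) ≤ (X.card : ℝ) * (Real.log n) ^ (2.1 : ℝ))
    (P3 : ∀ X Y : Finset (Fin n), Disjoint X Y →
      (Real.log n) ^ (1.1 : ℝ) / P ≤ (X.card : ℝ) →
      (Real.log n) ^ (1.1 : ℝ) / P ≤ (Y.card : ℝ) →
      (arcsBetween D X Y : ℝ) ≤ (1 + α/2) * X.card * Y.card * P)
    (hL4 : 4 ≤ Real.log n) (hLα : 2 + α ≤ Real.log n)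
    (S T : Finset (Fin n)) (hST : Disjoint S T) (hS8 : (S.card : ℝ) ≤ (T.card : ℝ) / 8)
    (hT : 6 * (Real.log n) ^ (2.2 : ℝ) / P ≤ (T.card : ℝ))
    (hdeg : ∀ s ∈ S, (1/2 + α/2) * P * T.card ≤ (outDeg D s T : ℝ))
    (X : Finset (Fin n)) (hX : X ⊆ S) :
    2 * X.card ≤ (X.biUnion (fun s => T.filter fun w => D s w = true)).card := by
  classical
  set L := Real.log n with hLdef
  have hL1 : (1:ℝ) < L := by linarith
  have hL0 : (0:ℝ) < L := by linarith
  set Y := X.biUnion (fun s => T.filter fun w => D s w = true) with hYdef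
  have hYT : Y ⊆ T := Finset.biUnion_subset.mpr fun s _ => Finset.filter_subset _ _
  -- each vertex's T-out-neighbourhood sits inside Y
  have hNY : ∀ s ∈ X, (T.filter fun w => D s w = true) ⊆ Y :=
    fun s hs => Finset.subset_biUnion_of_mem (fun s => T.filter fun w => D s w = true) hs
  have hYfilter : ∀ s ∈ X, (Y.filter fun w => D s w = true) = (T.filter fun w => D s w = true) := by
    intro s hs
    apply Finset.Subset.antisymm
    · exact Finset.filter_subset_filter _ hYT
    · intro w hw
      rw [Finset.mem_filter] at hw ⊢
      exact ⟨hNY s hs (Finset.mem_filter.mpr hw), hw.2⟩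
  rcases X.eq_empty_or_nonempty with rfl | hXne
  · simp
  have hXpos : (0:ℝ) < X.card := by exact_mod_cast Finset.card_pos.mpr hXne
  -- lower bound on edges from X into Y (or any superset of Y inside T)
  have hdegT : ∀ s ∈ X, (1/2 + α/2) * P * T.card ≤ (outDeg D s T : ℝ) :=
    fun s hs => hdeg s (hX hs)
  have h6L : 6 * L ^ (2.2:ℝ) ≤ P * T.card := by
    have := (div_le_iff₀ hP0).mp hT
    linarith [this]
  have hdeg' : ∀ s ∈ X, 3 * L ^ (2.2:ℝ) ≤ (outDeg D s T : ℝ) := by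
    intro s hs
    refine le_trans ?_ (hdegT s hs)
    have h1 : (1/2 : ℝ) * (P * T.card) ≤ (1/2 + α/2) * (P * T.card) := by
      have hPT : (0:ℝ) ≤ P * T.card := by positivity
      nlinarith
    calc 3 * L ^ (2.2:ℝ) = (1/2) * (6 * L ^ (2.2:ℝ)) := by ring
    _ ≤ (1/2) * (P * T.card) := by linarith
    _ ≤ (1/2 + α/2) * (P * T.card) := h1
    _ = (1/2 + α/2) * P * T.card := by ring
  have hsumT : (X.card : ℝ) * ((1/2 + α/2) * P * T.card) ≤ ∑ s ∈ X, (outDeg D s T : ℝ) := by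
    rw [Finset.card_eq_sum_ones X]
    push_cast
    rw [Finset.sum_mul]
    exact Finset.sum_le_sum fun s hs => by
      rw [one_mul]; exact hdegT s hs
  by_cases hA : (3:ℝ) * X.card ≤ L^2 / P
  · -- small case, use P2
    by_contra hcon
    push_neg at hcon
    have hYlt : (Y.card : ℝ) ≤ 2 * X.card := by
      have : Y.card + 1 ≤ 2 * X.card := hcon
      have := (Nat.cast_le (α := ℝ)).mpr this
      push_cast at this
      linarith
    have hXY : ((X ∪ Y).card : ℝ) ≤ 3 * X.card := by
      have := Finset.card_union_le X Y
      have := (Nat.cast_le (α := ℝ)).mpr this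
      push_cast at this
      linarith
    have hP2 := P2 (X ∪ Y) (le_trans hXY hA)
    have hlow : 3 * L ^ (2.2:ℝ) * X.card ≤ (arcsBetween D X Y : ℝ) := by
      rw [arcsBetween_eq_sum]
      push_cast
      have : ∑ s ∈ X, (outDeg D s Y : ℝ) = ∑ s ∈ X, (outDeg D s T : ℝ) := by
        refine Finset.sum_congr rfl fun s hs => ?_
        unfold outDeg
        rw [hYfilter s hs]
      rw [this]
      calc 3 * L ^ (2.2:ℝ) * X.card = (X.card : ℝ) * (3 * L ^ (2.2:ℝ)) := by ring
      _ ≤ ∑ s ∈ X, (outDeg D s T : ℝ) := by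
          rw [Finset.card_eq_sum_ones X]; push_cast; rw [Finset.sum_mul]
          exact Finset.sum_le_sum fun s hs => by rw [one_mul]; exact hdeg' s hs
    have hmid : (arcsBetween D X Y : ℝ) ≤ (arcsIn D (X ∪ Y) : ℝ) := by
      exact_mod_cast arcsBetween_le_arcsIn D X Y
    have hup : (arcsIn D (X ∪ Y) : ℝ) ≤ 3 * X.card * L ^ (2.1:ℝ) := by
      refine le_trans hP2 ?_
      have hLp : (0:ℝ) ≤ L ^ (2.1:ℝ) := by positivity
      nlinarith
    have : L ^ (2.2:ℝ) ≤ L ^ (2.1:ℝ) := by nlinarith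
    have : (2.2:ℝ) ≤ 2.1 := by
      rwa [Real.rpow_le_rpow_left_iff hL1] at this
    norm_num at this
  · -- big case, use P3
    push_neg at hA
    have hL11 : 3 * L ^ (1.1:ℝ) ≤ L ^ 2 := by
      have h09 : (3:ℝ) ≤ L ^ (0.9:ℝ) := by
        have h10 : (3:ℝ)^(10:ℕ) ≤ (L ^ (0.9:ℝ))^(10:ℕ) := by
          have : (L ^ (0.9:ℝ))^(10:ℕ) = L ^ (9:ℕ) := by
            rw [← Real.rpow_natCast (L ^ (0.9:ℝ)) 10, ← Real.rpow_mul hL0.le,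
              ← Real.rpow_natCast L 9]
            norm_num
          rw [this]
          calc (3:ℝ)^(10:ℕ) = 59049 := by norm_num
          _ ≤ (4:ℝ)^(9:ℕ) := by norm_num
          _ ≤ L ^ (9:ℕ) := by
              exact pow_le_pow_left₀ (by norm_num) hL4 9
        exact le_of_pow_le_pow_left₀ (by norm_num) (by positivity) h10
      calc 3 * L ^ (1.1:ℝ) ≤ L ^ (0.9:ℝ) * L ^ (1.1:ℝ) := by
            have : (0:ℝ) ≤ L ^ (1.1:ℝ) := by positivity
            nlinarith
      _ = L ^ ((0.9:ℝ) + 1.1) := (Real.rpow_add hL0 _ _).symm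
      _ = L ^ 2 := by norm_num
    have hXbig : L ^ (1.1:ℝ) / P ≤ (X.card : ℝ) := by
      have h1 : (3 * L ^ (1.1:ℝ)) / P ≤ L ^ 2 / P := (div_le_div_iff_of_pos_right hP0).mpr hL11
      have h2 : (3 * L ^ (1.1:ℝ)) / P = 3 * (L ^ (1.1:ℝ) / P) := by ring
      linarith [hA]
    set a := L ^ (1.1:ℝ) with hadef
    have ha0 : 0 < a := by positivity
    have ha1 : (1:ℝ) ≤ a := by
      have := Real.rpow_le_rpow_of_exponent_le hL1.le (by norm_num : (1:ℝ) ≤ 1.1)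
      rw [Real.rpow_one] at this
      linarith
    have haα : 2 + α ≤ a := by
      have := Real.rpow_le_rpow_of_exponent_le hL1.le (by norm_num : (1:ℝ) ≤ 1.1)
      rw [Real.rpow_one] at this
      linarith
    have hb : L ^ (2.2:ℝ) = a * a := by
      rw [hadef, ← Real.rpow_add hL0]; norm_num
    set m := ⌈a / P⌉₊ with hmdef
    have hmle : a / P ≤ (m:ℝ) := Nat.le_ceil _
    have hmR : (m:ℝ) ≤ a / P + 1 := (Nat.ceil_lt_add_one (by positivity)).le
    have hinvP : (1:ℝ) ≤ 1 / P := one_le_one_div hP0 hP1.le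
    have hE4 : a + 1 ≤ 6 * L ^ (2.2:ℝ) := by
      rw [hb]; nlinarith
    have hmT : m ≤ T.card := by
      have : (m:ℝ) ≤ (T.card:ℝ) := by
        have h1 : a / P + 1 ≤ a / P + 1 / P := by linarith
        have h2 : a / P + 1 / P = (a + 1) / P := by ring
        have h3 : (a + 1) / P ≤ 6 * L ^ (2.2:ℝ) / P := (div_le_div_iff_of_pos_right hP0).mpr hE4
        linarith
      exact_mod_cast this
    obtain ⟨Y', hYY', hY'T, hY'card⟩ := Finset.exists_subsuperset_card_eq hYT
      (le_max_left Y.card m) (max_le (Finset.card_le_card hYT) hmT)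
    have hY'big : a / P ≤ (Y'.card : ℝ) := by
      have : m ≤ Y'.card := hY'card ▸ le_max_right _ _
      calc a / P ≤ (m:ℝ) := hmle
      _ ≤ (Y'.card:ℝ) := by exact_mod_cast this
    have hdisj : Disjoint X Y' := hST.mono hX hY'T
    have h3 := P3 X Y' hdisj hXbig hY'big
    have hlowT : (X.card : ℝ) * ((1/2 + α/2) * P * T.card) ≤ (arcsBetween D X Y' : ℝ) := by
      rw [arcsBetween_eq_sum]
      push_cast
      refine le_trans hsumT (Finset.sum_le_sum fun s hs => ?_)
      have hsub : (T.filter fun w => D s w = true) ⊆ (Y'.filter fun w => D s w = true) := by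
        intro w hw
        rw [Finset.mem_filter] at hw ⊢
        exact ⟨hYY' (hNY s hs (Finset.mem_filter.mpr hw)), hw.2⟩
      exact_mod_cast Finset.card_le_card hsub
    have hstar : (1/2 + α/2) * T.card ≤ (1 + α/2) * Y'.card := by
      have h4 : ((1/2 + α/2) * (T.card:ℝ)) * ((X.card:ℝ) * P)
          ≤ ((1 + α/2) * (Y'.card:ℝ)) * ((X.card:ℝ) * P) := by nlinarith [le_trans hlowT h3]
      exact le_of_mul_le_mul_right h4 (by positivity)
    by_cases hYm : Y.card ≤ m
    · -- impossible: Y' would be tiny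
      exfalso
      have hkm : max Y.card m = m := max_eq_right hYm
      have hY'le : (Y'.card : ℝ) ≤ a / P + 1 := by
        rw [hY'card, hkm]; exact hmR
      have h5 := mul_le_mul_of_nonneg_left hstar hP0.le
      have h6 : P * ((Y'.card:ℝ)) ≤ a + P := by
        have := mul_le_mul_of_nonneg_left hY'le hP0.le
        have heq : P * (a / P + 1) = a + P := by field_simp
        linarith
      have h7 : 6 * (a * a) ≤ P * T.card := by rw [← hb]; exact h6L
      nlinarith [mul_nonneg hα.le (mul_nonneg hP0.le (Nat.cast_nonneg T.card)),
        mul_pos ha0 ha0, mul_nonneg hα.le ha0.le]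
    · -- Y' = Y and Y is at least half of T
      push_neg at hYm
      have hkY : max Y.card m = Y.card := max_eq_left hYm.le
      have hY'Y : Y' = Y := (Finset.eq_of_subset_of_card_le hYY' (by rw [hY'card, hkY])).symm
      have hXS : (X.card : ℝ) ≤ (S.card : ℝ) := by
        exact_mod_cast Finset.card_le_card hX
      have hTc0 : (0:ℝ) ≤ T.card := Nat.cast_nonneg _
      rw [hY'Y] at hstar
      have : ((2 * X.card : ℕ) : ℝ) ≤ ((Y.card : ℕ) : ℝ) := by
        push_cast
        nlinarith [mul_nonneg hα.le hTc0]
      exact_mod_cast this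


/-- Claim 5.5: in a pseudorandom digraph with `p = ω(log^8 n / n)`, if
`|S| ≤ |T|/8`, `|T| ≥ 6 log^{2.2} n / p`, and every vertex of `S` has out-degree
at least `(1/2 + α/2)p|T|` into `T`, then there is a `(2,+)`-matching from `S`
to `T` saturating `S`. -/
theorem stmt_11 (α : ℝ) (hα : 0 < α) (p : ℕ → ℝ) (hp : ∀ n, 0 < p n ∧ p n < 1)
    (hω : Tendsto (fun n : ℕ => p n * n / (Real.log n) ^ 8) atTop atTop)
    (D : (n : ℕ) → Fin n → Fin n → Bool)
    (hD : ∀ n, IsPseudorandom n α (p n) (D n)) :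
    ∀ᶠ n in atTop, ∀ S T : Finset (Fin n), Disjoint S T →
      (S.card : ℝ) ≤ (T.card : ℝ) / 8 →
      6 * (Real.log n) ^ (2.2 : ℝ) / p n ≤ (T.card : ℝ) →
      (∀ s ∈ S, (1/2 + α/2) * p n * T.card ≤ (outDeg (D n) s T : ℝ)) →
      ∃ y₁ y₂ : Fin n → Fin n,
        (∀ s ∈ S, y₁ s ∈ T ∧ y₂ s ∈ T ∧ y₁ s ≠ y₂ s ∧
          D n s (y₁ s) = true ∧ D n s (y₂ s) = true) ∧
        (∀ s ∈ S, ∀ s' ∈ S, s ≠ s' →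
          y₁ s ≠ y₁ s' ∧ y₁ s ≠ y₂ s' ∧ y₂ s ≠ y₁ s' ∧ y₂ s ≠ y₂ s') := by
  classical
  have hlog : Tendsto (fun n : ℕ => Real.log n) atTop atTop :=
    Real.tendsto_log_atTop.comp tendsto_natCast_atTop_atTop
  filter_upwards [hlog.eventually_ge_atTop 4, hlog.eventually_ge_atTop (2 + α)]
    with n hL4 hLα
  intro S T hST hS8 hT hdeg
  obtain ⟨_, hP2, hP3⟩ := hD n
  obtain ⟨hp0, hp1⟩ := hp n
  set N : Fin n → Finset (Fin n) := fun s => T.filter fun w => D n s w = true with hN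
  have key : ∀ X : Finset (Fin n), X ⊆ S → 2 * X.card ≤ (X.biUnion N).card :=
    fun X hX => hall_key hα hp0 hp1 (D n) hP2 hP3 hL4 hLα S T hST hS8 hT hdeg X hX
  set t : ({x // x ∈ S} × Fin 2) → Finset (Fin n) := fun a => N a.1.1 with ht
  have hall : ∀ A : Finset ({x // x ∈ S} × Fin 2), A.card ≤ (A.biUnion t).card := by
    intro A
    set X : Finset (Fin n) := A.image (fun a => a.1.1) with hXdef
    have hXS : X ⊆ S := by
      intro x hx
      simp only [hXdef, Finset.mem_image] at hx
      obtain ⟨a, _, rfl⟩ := hx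
      exact a.1.2
    have hbi : A.biUnion t = X.biUnion N := by
      ext w
      simp only [Finset.mem_biUnion, hXdef, Finset.mem_image, ht]
      constructor
      · rintro ⟨a, ha, hw⟩; exact ⟨a.1.1, ⟨a, ha, rfl⟩, hw⟩
      · rintro ⟨x, ⟨a, ha, rfl⟩, hw⟩; exact ⟨a, ha, hw⟩
    have hcard : A.card ≤ 2 * X.card := by
      have hinj : Function.Injective
          (fun a : {x // x ∈ S} × Fin 2 => ((a.1.1 : Fin n), a.2)) := by
        rintro ⟨⟨x, hx⟩, i⟩ ⟨⟨y, hy⟩, j⟩ h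
        simp only [Prod.mk.injEq] at h
        simp [Prod.ext_iff, Subtype.ext_iff, h.1, h.2]
      calc A.card = (A.image (fun a => ((a.1.1 : Fin n), a.2))).card :=
          (Finset.card_image_of_injective A hinj).symm
      _ ≤ (X ×ˢ (Finset.univ : Finset (Fin 2))).card := by
          apply Finset.card_le_card
          intro e he
          simp only [Finset.mem_image] at he
          obtain ⟨a, ha, rfl⟩ := he
          simp only [Finset.mem_product, Finset.mem_univ, and_true, hXdef, Finset.mem_image]
          exact ⟨a, ha, rfl⟩
      _ = 2 * X.card := by
          rw [Finset.card_product]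
          simp [mul_comm]
    rw [hbi]
    exact le_trans hcard (key X hXS)
  obtain ⟨f, hfinj, hft⟩ := (Finset.all_card_le_biUnion_card_iff_exists_injective t).mp hall
  refine ⟨fun s => if h : s ∈ S then f (⟨s, h⟩, 0) else s,
          fun s => if h : s ∈ S then f (⟨s, h⟩, 1) else s, ?_, ?_⟩
  · intro s hs
    simp only [dif_pos hs]
    have h0 := hft (⟨s, hs⟩, 0)
    have h1 := hft (⟨s, hs⟩, 1)
    simp only [ht, hN, Finset.mem_filter] at h0 h1
    refine ⟨h0.1, h1.1, ?_, h0.2, h1.2⟩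
    intro heq
    have := hfinj heq
    simp at this
  · intro s hs s' hs' hne
    simp only [dif_pos hs, dif_pos hs']
    refine ⟨?_, ?_, ?_, ?_⟩ <;>
    · intro heq
      have := hfinj heq
      simp only [Prod.mk.injEq, Subtype.mk.injEq] at this
      exact hne this.1
end
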